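/- There exists a (2,3;5)-balanced biregular graph of order 8, i.e., a simple graph of girth 5 on 8 vertices with 4 vertices of degree 2 and 4 vertices of degree 3; consequently, n_bb(2,3;5) = 8. -/

import Mathlib

open SimpleGraph Set

/-- The degree of a vertex, via the natural cardinality of its neighbor set. -/
noncomputable def deg {V : Type*} (G : SimpleGraph V) (v : V) : ℕ :=
  (G.neighborSet v).ncard

/-- Number of edges both of whose endpoints have degree `d`. -/
noncomputable def edgeCountDeg {V : Type*} (G : SimpleGraph V) (d : ℕ) : ℕ :=
  {e ∈ G.edgeSet | ∀ v ∈ e, deg G v = d}.ncard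

/-- An `(r,s;g)`-balanced biregular graph: girth `g`, degree set exactly `{r, s}`,
and equally many vertices of degree `r` as of degree `s`. -/
def IsBabi {V : Type*} (r s g : ℕ) (G : SimpleGraph V) : Prop :=
  G.girth = g ∧ (∀ v, deg G v = r ∨ deg G v = s) ∧
  (∃ v, deg G v = r) ∧ (∃ v, deg G v = s) ∧
  {v | deg G v = r}.ncard = {v | deg G v = s}.ncard

/-! ### Auxiliary material -/

lemma deg_eq' {V : Type*} [Fintype V] (G : SimpleGraph V) [DecidableRel G.Adj] (v : V) :
    deg G v = G.degree v := by
  rw [deg, Set.ncard_eq_toFinset_card']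
  simp [SimpleGraph.degree, SimpleGraph.neighborFinset]

lemma cycle3 {V : Type*} {G : SimpleGraph V} {a : V} (w : G.Walk a a) (hc : w.IsCycle)
    (hl : w.length = 3) : ∃ x y z, G.Adj x y ∧ G.Adj y z ∧ G.Adj z x := by
  match w, hl with
  | .cons (v := b) h1 (.cons (v := c) h2 (.cons h3 .nil)), _ =>
    exact ⟨a, b, c, h1, h2, h3⟩

lemma cycle4 {V : Type*} {G : SimpleGraph V} {a : V} (w : G.Walk a a) (hc : w.IsCycle)
    (hl : w.length = 4) :
    ∃ x y z u, G.Adj x y ∧ G.Adj y z ∧ G.Adj z u ∧ G.Adj u x ∧ x ≠ z ∧ y ≠ u := by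
  match w, hl with
  | .cons (v := b) h1 (.cons (v := c) h2 (.cons (v := d) h3 (.cons h4 .nil))), _ =>
    have hs := hc.2
    simp [Walk.support_cons, List.nodup_cons] at hs
    exact ⟨a, b, c, d, h1, h2, h3, h4, fun h => by simp [h] at hs, fun h => by simp [h] at hs⟩

/-- The Petersen graph minus the two endpoints of an edge, on 8 vertices. -/
def adjFn : Fin 8 → Fin 8 → Bool := fun a b =>
  (min a.val b.val, max a.val b.val) ∈
    [(0,1),(1,2),(2,3),(4,6),(5,7),(4,7),(0,4),(1,5),(2,6),(3,7)]

def G8 : SimpleGraph (Fin 8) where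
  Adj a b := adjFn a b
  symm := ⟨fun a b => by revert a b; decide⟩
  loopless := ⟨fun a => by revert a; decide⟩

instance : DecidableRel G8.Adj := fun a b => inferInstanceAs (Decidable (adjFn a b = true))

def W5 : G8.Walk 0 0 :=
  .cons (by decide) (.cons (u := 1) (v := 5) (by decide)
    (.cons (v := 7) (by decide) (.cons (v := 4) (by decide) (.cons (by decide) .nil))))

lemma W5_cycle : W5.IsCycle := by
  rw [Walk.isCycle_def]
  exact ⟨by rw [Walk.isTrail_def]; decide, by simp [W5], by decide⟩

lemma G8_egirth_le : G8.egirth ≤ 5 := by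
  have h : G8.egirth ≤ (W5.length : ℕ∞) := iInf₂_le_of_le 0 W5 (iInf_le _ W5_cycle)
  simpa [W5] using h

lemma G8_le_egirth : (5 : ℕ∞) ≤ G8.egirth := by
  rw [le_egirth]
  intro a w hw
  have h3 := hw.three_le_length
  have h5 : 5 ≤ w.length := by
    by_contra hlt
    push_neg at hlt
    interval_cases h : w.length
    · obtain ⟨x, y, z, h1, h2, h3⟩ := by exact cycle3 w hw h
      revert h1 h2 h3; revert x y z; decide
    · obtain ⟨x, y, z, u, h1, h2, h3, h4, h5, h6⟩ := by exact cycle4 w hw h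
      revert h1 h2 h3 h4 h5 h6; revert x y z u; decide
  exact_mod_cast h5

lemma G8_girth : G8.girth = 5 := by
  have h : G8.egirth = 5 := le_antisymm G8_egirth_le G8_le_egirth
  rw [SimpleGraph.girth, h]
  rfl

lemma lower (n : ℕ) (G : SimpleGraph (Fin n)) (hg : G.girth = 5)
    (hd : ∀ v, deg G v = 2 ∨ deg G v = 3)
    (hc : {v | deg G v = 2}.ncard = {v | deg G v = 3}.ncard) : 8 ≤ n := by
  classical
  have hac : ¬ G.IsAcyclic := by
    intro h
    have := h.girth_eq_zero
    omega
  obtain ⟨a, w, hw, hlen⟩ := (exists_girth_eq_length (G := G)).2 hac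
  have h5 : w.length = 5 := by omega
  have hn5 : 5 ≤ n := by
    have hnd := hw.2
    have := hnd.length_le_card
    have hsl : w.support.tail.length = 5 := by
      have := w.length_support
      simp at this ⊢
      omega
    simpa [hsl] using this
  set A := Finset.univ.filter (fun v : Fin n => deg G v = 2) with hA
  set B := Finset.univ.filter (fun v : Fin n => deg G v = 3) with hB
  have hcardA : {v | deg G v = 2}.ncard = A.card := by
    rw [Set.ncard_eq_toFinset_card', Set.toFinset_setOf]
  have hcardB : {v | deg G v = 3}.ncard = B.card := by
    rw [Set.ncard_eq_toFinset_card', Set.toFinset_setOf]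
  have hab : A.card = B.card := by rw [← hcardA, ← hcardB]; exact hc
  have hBAc : B = Aᶜ := by
    ext v
    simp [hA, hB, Finset.mem_compl]
    rcases hd v with h | h <;> simp [h]
  have hsumn : A.card + B.card = n := by
    rw [hBAc]
    simp [Finset.card_compl]
    have : A.card ≤ n := by simpa using A.card_le_univ
    omega
  have hsum : ∑ v, G.degree v = 2 * A.card + 3 * B.card := by
    rw [← Finset.sum_filter_add_sum_filter_not Finset.univ (fun v => deg G v = 2)]
    have h1 : ∑ v ∈ A, G.degree v = 2 * A.card := by
      rw [Finset.sum_congr rfl (fun v hv => ?_), Finset.sum_const, smul_eq_mul, mul_comm]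
      rw [hA, Finset.mem_filter] at hv
      rw [← deg_eq']; exact hv.2
    have h2 : ∑ v ∈ Finset.univ.filter (fun v => ¬ deg G v = 2), G.degree v = 3 * B.card := by
      have : Finset.univ.filter (fun v : Fin n => ¬ deg G v = 2) = B := by
        rw [hBAc]; ext v; simp [hA]
      rw [this]
      rw [Finset.sum_congr rfl (fun v hv => ?_), Finset.sum_const, smul_eq_mul, mul_comm]
      rw [hB, Finset.mem_filter] at hv
      rw [← deg_eq']; exact hv.2
    rw [h1, h2]
  have heven : Even (∑ v, G.degree v) := by
    rw [G.sum_degrees_eq_twice_card_edges]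
    exact even_two_mul _
  rw [hsum, ← hab] at heven
  have : Even A.card := by
    rcases heven with ⟨k, hk⟩
    rcases Nat.even_or_odd A.card with h | h
    · exact h
    · exfalso; rcases h with ⟨m, hm⟩; omega
  rcases this with ⟨k, hk⟩
  omega

/-- a `(2,3;5)`-babi-graph of order 8 exists and `n_bb(2,3;5) = 8`. -/
theorem stmt_10 :
    (∃ G : SimpleGraph (Fin 8), G.girth = 5 ∧
      {v | deg G v = 2}.ncard = 4 ∧ {v | deg G v = 3}.ncard = 4) ∧
    (∀ (n : ℕ) (G : SimpleGraph (Fin n)), IsBabi 2 3 5 G → 8 ≤ n) := by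
  constructor
  · refine ⟨G8, G8_girth, ?_, ?_⟩
    · have h : {v | deg G8 v = 2} = {v | G8.degree v = 2} := by
        ext v; simp [deg_eq']
      rw [h, Set.ncard_eq_toFinset_card', Set.toFinset_setOf]
      decide
    · have h : {v | deg G8 v = 3} = {v | G8.degree v = 3} := by
        ext v; simp [deg_eq']
      rw [h, Set.ncard_eq_toFinset_card', Set.toFinset_setOf]
      decide
  · rintro n G ⟨hg, hd, -, -, hc⟩
    exact lower n G hg hd hc
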